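/- If ‖x(j)‖ ≤ K for every j ∈ J, then the normalized weights π(β,j) = w(β,j) / W(β) satisfy Σ_{j∈J} π(β,j)² ≤ exp(4 K ‖β‖) / |J| for every β ∈ ℝ^p. -/

import Mathlib

open scoped RealInnerProductSpace BigOperators

/-- If `‖x j‖ ≤ K` for all `j`, then the normalized weights
`π(β,j) = exp⟪β, x j⟫ / Σ_{j'} exp⟪β, x j'⟫` satisfy
`Σ_j π(β,j)² ≤ exp(4K‖β‖)/|J|`. -/
theorem sum_sq_normalized_weights_le
    {p : ℕ} {J : Type*} [Fintype J] [Nonempty J]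
    (K : ℝ) (hK : 0 ≤ K)
    (x : J → EuclideanSpace ℝ (Fin p)) (hx : ∀ j, ‖x j‖ ≤ K)
    (β : EuclideanSpace ℝ (Fin p)) :
    ∑ j, (Real.exp ⟪β, x j⟫ / ∑ j', Real.exp ⟪β, x j'⟫) ^ 2
      ≤ Real.exp (4 * K * ‖β‖) / (Fintype.card J : ℝ) := by
  set a := K * ‖β‖ with ha
  have ha0 : 0 ≤ a := mul_nonneg hK (norm_nonneg β)
  have hb : ∀ j, |⟪β, x j⟫| ≤ a := by
    intro j
    calc |⟪β, x j⟫| ≤ ‖β‖ * ‖x j‖ := abs_real_inner_le_norm _ _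
      _ ≤ ‖β‖ * K := by
          exact mul_le_mul_of_nonneg_left (hx j) (norm_nonneg β)
      _ = a := by rw [ha, mul_comm]
  have hn : (0 : ℝ) < Fintype.card J := by
    exact_mod_cast Fintype.card_pos
  set n : ℝ := (Fintype.card J : ℝ)
  have hS : (n * Real.exp (-a)) ≤ ∑ j', Real.exp ⟪β, x j'⟫ := by
    have := Finset.card_nsmul_le_sum (Finset.univ : Finset J)
      (fun j => Real.exp ⟪β, x j⟫) (Real.exp (-a))
      (fun j _ => Real.exp_le_exp.2 (neg_le_of_abs_le (hb j)))
    simpa [nsmul_eq_mul, Finset.card_univ, n] using this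
  have hSpos : (0 : ℝ) < n * Real.exp (-a) :=
    mul_pos hn (Real.exp_pos _)
  have hterm : ∀ j : J,
      Real.exp ⟪β, x j⟫ / ∑ j', Real.exp ⟪β, x j'⟫
        ≤ Real.exp (2 * a) / n := by
    intro j
    have h1 : Real.exp ⟪β, x j⟫ / ∑ j', Real.exp ⟪β, x j'⟫
        ≤ Real.exp a / (n * Real.exp (-a)) :=
      div_le_div₀ (Real.exp_pos a).le
        (Real.exp_le_exp.2 (le_of_abs_le (hb j))) hSpos hS
    have h2 : Real.exp a / (n * Real.exp (-a)) = Real.exp (2 * a) / n := by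
      have he : Real.exp (2 * a) * Real.exp (-a) = Real.exp a := by
        rw [← Real.exp_add]; congr 1; ring
      rw [div_eq_div_iff hSpos.ne' hn.ne']
      linear_combination (-n) * he
    linarith
  have hnonneg : ∀ j : J, 0 ≤ Real.exp ⟪β, x j⟫ / ∑ j', Real.exp ⟪β, x j'⟫ :=
    fun j => div_nonneg (Real.exp_pos _).le (le_trans hSpos.le hS)
  have hsq : ∀ j : J,
      (Real.exp ⟪β, x j⟫ / ∑ j', Real.exp ⟪β, x j'⟫) ^ 2
        ≤ (Real.exp (2 * a) / n) ^ 2 :=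
    fun j => pow_le_pow_left₀ (hnonneg j) (hterm j) 2
  calc ∑ j, (Real.exp ⟪β, x j⟫ / ∑ j', Real.exp ⟪β, x j'⟫) ^ 2
      ≤ n * ((Real.exp (2 * a) / n) ^ 2) := by
        have := Finset.sum_le_card_nsmul (Finset.univ : Finset J)
          (fun j => (Real.exp ⟪β, x j⟫ / ∑ j', Real.exp ⟪β, x j'⟫) ^ 2)
          ((Real.exp (2 * a) / n) ^ 2) (fun j _ => hsq j)
        simpa [nsmul_eq_mul, Finset.card_univ, n] using this
    _ = Real.exp (4 * K * ‖β‖) / n := by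
        rw [div_pow, ← Real.exp_nat_mul]
        field_simp
        ring_nf
        rfl
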